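/- Fix 0 < λ ≤ 1, K ≥ 0, reals 0 < a < b and c < d < 0, and ω > 0. Let ξ : ℝ² → ℂ satisfy |ξ(p) − ξ(q)| ≤ K·|p − q|^λ for all p, q, and ξ(x,y) = 0 whenever (x,y) ∉ [a,b] × [c,d]. Then for every t ∈ ℝ the function F(t) = ∬_{ℝ²} ξ(e^{−tω} x, y) (x − y)^{-2} dx dy is differentiable at t with derivative F′(t) = ω ∬_{ℝ²} ξ(x,y) · e^{tω} (−x e^{tω} − y) / (x e^{tω} − y)^{3} dx dy. -/

import Mathlib

open MeasureTheory Real Filter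

lemma aux_integrable_of_bound {f : ℝ × ℝ → ℂ} {S : Set (ℝ × ℝ)}
    (hf : AEStronglyMeasurable f (volume : Measure (ℝ × ℝ)))
    (hSm : MeasurableSet S) (hSfin : volume S < ⊤) {C : ℝ}
    (h : ∀ p, ‖f p‖ ≤ S.indicator (fun _ => C) p) : Integrable f := by
  refine Integrable.mono' ?_ hf (Filter.Eventually.of_forall h)
  exact (integrable_indicator_iff hSm).2 (integrableOn_const hSfin.ne)

lemma aux_cont {lam K : ℝ} (hlam0 : 0 < lam) {ξ : ℝ × ℝ → ℂ}
    (hHolder : ∀ p q : ℝ × ℝ, ‖ξ p - ξ q‖ ≤ K * dist p q ^ lam) : Continuous ξ := by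
  rw [continuous_iff_continuousAt]
  intro p
  rw [ContinuousAt, tendsto_iff_dist_tendsto_zero]
  have h1 : Filter.Tendsto (fun q : ℝ × ℝ => K * dist q p ^ lam) (nhds p) (nhds 0) := by
    have h2 : Filter.Tendsto (fun q : ℝ × ℝ => dist q p) (nhds p) (nhds 0) := by
      simpa using tendsto_iff_dist_tendsto_zero.1 (Filter.tendsto_id (x := nhds p))
    have h3 : ContinuousAt (fun x : ℝ => K * x ^ lam) 0 :=
      (Real.continuousAt_rpow_const 0 lam (Or.inr hlam0.le)).const_mul K
    have := h3.tendsto.comp h2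
    simpa [Function.comp_def, Real.zero_rpow hlam0.ne'] using this
  refine squeeze_zero (fun q => dist_nonneg) (fun q => ?_) h1
  simpa [dist_eq_norm] using hHolder q p

lemma aux_bdd {lam K : ℝ} (hlam0 : 0 < lam) (hK : 0 ≤ K)
    {a b c d : ℝ} (hcd : c < d) {ξ : ℝ × ℝ → ℂ}
    (hHolder : ∀ p q : ℝ × ℝ, ‖ξ p - ξ q‖ ≤ K * dist p q ^ lam)
    (hsupp : ∀ x y : ℝ, (x, y) ∉ Set.Icc a b ×ˢ Set.Icc c d → ξ (x, y) = 0) :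
    ∀ p : ℝ × ℝ, ‖ξ p‖ ≤ K * (d - c + 1) ^ lam := by
  intro p
  have hM0 : 0 ≤ K * (d - c + 1) ^ lam :=
    mul_nonneg hK (Real.rpow_nonneg (by linarith) _)
  by_cases hp : p ∈ Set.Icc a b ×ˢ Set.Icc c d
  · have hq : ξ (p.1, c - 1) = 0 := by
      apply hsupp
      simp only [Set.mem_prod, Set.mem_Icc, not_and_or]
      right; left; linarith
    have := hHolder p (p.1, c - 1)
    rw [hq, sub_zero] at this
    refine this.trans ?_
    have hdist : dist p (p.1, c - 1) ≤ d - c + 1 := by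
      have hp2 : p.2 ∈ Set.Icc c d := hp.2
      simp only [Set.mem_Icc] at hp2
      rw [Prod.dist_eq]
      simp only [dist_self, Real.dist_eq]
      rw [max_le_iff]
      refine ⟨by linarith, ?_⟩
      rw [abs_le]
      constructor <;> linarith
    exact mul_le_mul_of_nonneg_left
      (Real.rpow_le_rpow dist_nonneg hdist hlam0.le) hK
  · rw [show p = (p.1, p.2) from rfl, hsupp _ _ (by simpa using hp)]
    simpa using hM0

lemma aux_meas_H {ξ : ℝ × ℝ → ℂ} (hcont : Continuous ξ) (e : ℝ) :
    AEStronglyMeasurable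
      (fun p : ℝ × ℝ => ξ p * ((e * ((e * p.1 - p.2) ^ 2)⁻¹ : ℝ) : ℂ))
      (volume : Measure (ℝ × ℝ)) :=
  (hcont.measurable.mul (Complex.measurable_ofReal.comp
    (measurable_const.mul
      ((((measurable_fst.const_mul e).sub measurable_snd).pow_const 2).inv)))).aestronglyMeasurable

lemma aux_integrable_H {a b c d M : ℝ} (ha : 0 < a) (hd : d < 0) (hM : 0 ≤ M)
    {ξ : ℝ × ℝ → ℂ} (hcont : Continuous ξ) (hMb : ∀ p, ‖ξ p‖ ≤ M)
    (hsupp : ∀ x y : ℝ, (x, y) ∉ Set.Icc a b ×ˢ Set.Icc c d → ξ (x, y) = 0)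
    {e : ℝ} (he : 0 < e) :
    Integrable (fun p : ℝ × ℝ => ξ p * ((e * ((e * p.1 - p.2) ^ 2)⁻¹ : ℝ) : ℂ)) := by
  refine aux_integrable_of_bound (aux_meas_H hcont e)
    (measurableSet_Icc.prod measurableSet_Icc)
    ((isCompact_Icc.prod isCompact_Icc).measure_lt_top)
    (S := Set.Icc a b ×ˢ Set.Icc c d) (C := M * (e * (d ^ 2)⁻¹)) ?_
  intro p
  by_cases hp : p ∈ Set.Icc a b ×ˢ Set.Icc c d
  · rw [Set.indicator_of_mem hp]
    have hp1 : a ≤ p.1 := hp.1.1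
    have hp2 : p.2 ≤ d := hp.2.2
    have hden : -d ≤ e * p.1 - p.2 := by nlinarith
    have hden2 : d ^ 2 ≤ (e * p.1 - p.2) ^ 2 := by nlinarith
    have hd2 : (0:ℝ) < d ^ 2 := by nlinarith
    have hinv : ((e * p.1 - p.2) ^ 2)⁻¹ ≤ (d ^ 2)⁻¹ := inv_anti₀ hd2 hden2
    simp only [norm_mul, Complex.norm_real, Real.norm_eq_abs, abs_mul]
    rw [abs_of_pos he, abs_of_nonneg (by positivity : (0:ℝ) ≤ ((e * p.1 - p.2) ^ 2)⁻¹)]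
    exact mul_le_mul (hMb p) (mul_le_mul_of_nonneg_left hinv he.le)
      (by positivity) hM
  · rw [Set.indicator_of_notMem hp]
    rw [show p = (p.1, p.2) from rfl, hsupp _ _ (by simpa using hp)]
    simp

lemma aux_integrable_H0 {a b c d M : ℝ} (ha : 0 < a) (hd : d < 0) (hM : 0 ≤ M)
    {ξ : ℝ × ℝ → ℂ} (hcont : Continuous ξ) (hMb : ∀ p, ‖ξ p‖ ≤ M)
    (hsupp : ∀ x y : ℝ, (x, y) ∉ Set.Icc a b ×ˢ Set.Icc c d → ξ (x, y) = 0)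
    {e : ℝ} (he : 0 < e) :
    Integrable (fun p : ℝ × ℝ => ξ p * ((((e * p.1 - p.2) ^ 2)⁻¹ : ℝ) : ℂ)) := by
  have hm : AEStronglyMeasurable
      (fun p : ℝ × ℝ => ξ p * ((((e * p.1 - p.2) ^ 2)⁻¹ : ℝ) : ℂ))
      (volume : Measure (ℝ × ℝ)) :=
    (hcont.measurable.mul (Complex.measurable_ofReal.comp
      ((((measurable_fst.const_mul e).sub measurable_snd).pow_const 2).inv))).aestronglyMeasurable
  refine aux_integrable_of_bound hm
    (measurableSet_Icc.prod measurableSet_Icc)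
    ((isCompact_Icc.prod isCompact_Icc).measure_lt_top)
    (S := Set.Icc a b ×ˢ Set.Icc c d) (C := M * (d ^ 2)⁻¹) ?_
  intro p
  by_cases hp : p ∈ Set.Icc a b ×ˢ Set.Icc c d
  · rw [Set.indicator_of_mem hp]
    have hp1 : a ≤ p.1 := hp.1.1
    have hp2 : p.2 ≤ d := hp.2.2
    have hden : -d ≤ e * p.1 - p.2 := by nlinarith
    have hden2 : d ^ 2 ≤ (e * p.1 - p.2) ^ 2 := by nlinarith
    have hd2 : (0:ℝ) < d ^ 2 := by nlinarith
    simp only [norm_mul, Complex.norm_real, Real.norm_eq_abs]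
    rw [abs_of_nonneg (by positivity : (0:ℝ) ≤ ((e * p.1 - p.2) ^ 2)⁻¹)]
    exact mul_le_mul (hMb p) (inv_anti₀ hd2 hden2) (by positivity) hM
  · rw [Set.indicator_of_notMem hp]
    rw [show p = (p.1, p.2) from rfl, hsupp _ _ (by simpa using hp)]
    simp

lemma aux_integrable_f {a b c d M : ℝ} (ha : 0 < a) (hd : d < 0) (hM : 0 ≤ M)
    {ξ : ℝ × ℝ → ℂ} (hcont : Continuous ξ) (hMb : ∀ p, ‖ξ p‖ ≤ M)
    (hsupp : ∀ x y : ℝ, (x, y) ∉ Set.Icc a b ×ˢ Set.Icc c d → ξ (x, y) = 0)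
    {e : ℝ} (he : 0 < e) :
    Integrable (fun p : ℝ × ℝ => ξ (e⁻¹ * p.1, p.2) * ((((p.1 - p.2) ^ 2)⁻¹ : ℝ) : ℂ)) := by
  have hm : AEStronglyMeasurable
      (fun p : ℝ × ℝ => ξ (e⁻¹ * p.1, p.2) * ((((p.1 - p.2) ^ 2)⁻¹ : ℝ) : ℂ))
      (volume : Measure (ℝ × ℝ)) := by
    refine (((hcont.comp ((continuous_const.mul continuous_fst).prodMk continuous_snd)).measurable).mul
      (Complex.measurable_ofReal.comp
        (((measurable_fst.sub measurable_snd).pow_const 2).inv))).aestronglyMeasurable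
  refine aux_integrable_of_bound hm (measurableSet_Icc.prod measurableSet_Icc)
    ((isCompact_Icc.prod isCompact_Icc).measure_lt_top)
    (S := Set.Icc (e * a) (e * b) ×ˢ Set.Icc c d) (C := M * (d ^ 2)⁻¹) ?_
  intro p
  by_cases hp : p ∈ Set.Icc (e * a) (e * b) ×ˢ Set.Icc c d
  · rw [Set.indicator_of_mem hp]
    have hp1 : e * a ≤ p.1 := hp.1.1
    have hp2 : p.2 ≤ d := hp.2.2
    have hden : -d ≤ p.1 - p.2 := by nlinarith
    have hden2 : d ^ 2 ≤ (p.1 - p.2) ^ 2 := by nlinarith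
    have hd2 : (0:ℝ) < d ^ 2 := by nlinarith
    simp only [norm_mul, Complex.norm_real, Real.norm_eq_abs]
    rw [abs_of_nonneg (by positivity : (0:ℝ) ≤ ((p.1 - p.2) ^ 2)⁻¹)]
    exact mul_le_mul (hMb _) (inv_anti₀ hd2 hden2) (by positivity) hM
  · rw [Set.indicator_of_notMem hp]
    have : (e⁻¹ * p.1, p.2) ∉ Set.Icc a b ×ˢ Set.Icc c d := by
      intro hmem
      apply hp
      simp only [Set.mem_prod, Set.mem_Icc] at hmem ⊢
      obtain ⟨⟨h1, h2⟩, h3⟩ := hmem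
      have hcan : e * (e⁻¹ * p.1) = p.1 := by field_simp
      refine ⟨⟨?_, ?_⟩, h3⟩
      · nlinarith [mul_le_mul_of_nonneg_left h1 he.le]
      · nlinarith [mul_le_mul_of_nonneg_left h2 he.le]
    rw [hsupp _ _ this]
    simp

lemma aux_change {a b c d M : ℝ} (ha : 0 < a) (hd : d < 0) (hM : 0 ≤ M)
    {ξ : ℝ × ℝ → ℂ} (hcont : Continuous ξ) (hMb : ∀ p, ‖ξ p‖ ≤ M)
    (hsupp : ∀ x y : ℝ, (x, y) ∉ Set.Icc a b ×ˢ Set.Icc c d → ξ (x, y) = 0)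
    {e : ℝ} (he : 0 < e) :
    (∫ p : ℝ × ℝ, ξ (e⁻¹ * p.1, p.2) * ((((p.1 - p.2) ^ 2)⁻¹ : ℝ) : ℂ))
      = ∫ p : ℝ × ℝ, ξ p * ((e * ((e * p.1 - p.2) ^ 2)⁻¹ : ℝ) : ℂ) := by
  have hf := aux_integrable_f ha hd hM hcont hMb hsupp he
  have hH0 := aux_integrable_H0 ha hd hM hcont hMb hsupp he
  set G : ℝ → ℂ := fun u => ∫ y : ℝ, ξ (u, y) * ((((e * u - y) ^ 2)⁻¹ : ℝ) : ℂ) with hG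
  have hx : ∀ x : ℝ, e * (e⁻¹ * x) = x := fun x => by field_simp
  calc (∫ p : ℝ × ℝ, ξ (e⁻¹ * p.1, p.2) * ((((p.1 - p.2) ^ 2)⁻¹ : ℝ) : ℂ))
      = ∫ x : ℝ, ∫ y : ℝ, ξ (e⁻¹ * x, y) * ((((x - y) ^ 2)⁻¹ : ℝ) : ℂ) := by
        rw [show (volume : Measure (ℝ × ℝ)) = (volume : Measure ℝ).prod volume from
          Measure.volume_eq_prod ℝ ℝ] at hf ⊢
        exact integral_prod _ hf
    _ = ∫ x : ℝ, G (e⁻¹ * x) := by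
        congr 1
        funext x
        rw [hG]
        congr 1
        funext y
        rw [hx x]
    _ = |e⁻¹⁻¹| • ∫ u : ℝ, G u := Measure.integral_comp_mul_left G e⁻¹
    _ = e • ∫ u : ℝ, G u := by rw [inv_inv, abs_of_pos he]
    _ = e • ∫ p : ℝ × ℝ, ξ p * ((((e * p.1 - p.2) ^ 2)⁻¹ : ℝ) : ℂ) := by
        rw [show (volume : Measure (ℝ × ℝ)) = (volume : Measure ℝ).prod volume from
          Measure.volume_eq_prod ℝ ℝ] at hH0
        rw [show (volume : Measure (ℝ × ℝ)) = (volume : Measure ℝ).prod volume from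
          Measure.volume_eq_prod ℝ ℝ]
        rw [integral_prod _ hH0]
    _ = ∫ p : ℝ × ℝ, e • (ξ p * ((((e * p.1 - p.2) ^ 2)⁻¹ : ℝ) : ℂ)) :=
        (integral_smul e _).symm
    _ = ∫ p : ℝ × ℝ, ξ p * ((e * ((e * p.1 - p.2) ^ 2)⁻¹ : ℝ) : ℂ) := by
        congr 1
        funext p
        rw [Complex.real_smul]
        push_cast
        ring

lemma aux_deriv {x y ω : ℝ} (hx : 0 < x) (hy : y < 0) (s : ℝ) :
    HasDerivAt (fun u : ℝ => Real.exp (u * ω) * ((Real.exp (u * ω) * x - y) ^ 2)⁻¹)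
      (ω * (Real.exp (s * ω) * (-x * Real.exp (s * ω) - y)
        / (x * Real.exp (s * ω) - y) ^ 3)) s := by
  have hden : (0:ℝ) < Real.exp (s * ω) * x - y := by
    nlinarith [Real.exp_pos (s * ω)]
  have hne : Real.exp (s * ω) * x - y ≠ 0 := ne_of_gt hden
  have he : HasDerivAt (fun u : ℝ => Real.exp (u * ω)) (Real.exp (s * ω) * ω) s := by
    simpa using ((hasDerivAt_id s).mul_const ω).exp
  have hw : HasDerivAt (fun u : ℝ => Real.exp (u * ω) * x - y)
      (Real.exp (s * ω) * ω * x) s := (he.mul_const x).sub_const y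
  have hv : HasDerivAt (fun u : ℝ => (Real.exp (u * ω) * x - y) ^ 2)
      (2 * (Real.exp (s * ω) * x - y) ^ 1 * (Real.exp (s * ω) * ω * x)) s := hw.pow 2
  have hvinv := hv.inv (pow_ne_zero 2 hne)
  have hfin := he.mul hvinv
  refine hfin.congr_deriv ?_
  have h3 : (x * Real.exp (s * ω) - y) ^ 3 ≠ 0 := by
    apply pow_ne_zero
    rw [show x * Real.exp (s * ω) - y = Real.exp (s * ω) * x - y by ring]
    exact hne
  simp only [Pi.inv_apply]
  field_simp
  ring

/-- Derivative at any real time `t` of the Liouville measure along a simple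
earthquake path, evaluated on a Hölder test function `ξ` supported in a box of
geodesics crossing the earthquake geodesic. -/
theorem liouville_deriv_simple_earthquake_all_t
    (lam K : ℝ) (hlam0 : 0 < lam) (hlam1 : lam ≤ 1) (hK : 0 ≤ K)
    (a b c d : ℝ) (ha : 0 < a) (hab : a < b) (hcd : c < d) (hd : d < 0)
    (ω : ℝ) (hω : 0 < ω)
    (ξ : ℝ × ℝ → ℂ)
    (hHolder : ∀ p q : ℝ × ℝ, ‖ξ p - ξ q‖ ≤ K * dist p q ^ lam)
    (hsupp : ∀ x y : ℝ, (x, y) ∉ Set.Icc a b ×ˢ Set.Icc c d → ξ (x, y) = 0)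
    (t : ℝ) :
    HasDerivAt
      (fun t : ℝ => ∫ p : ℝ × ℝ,
        ξ (Real.exp (-(t * ω)) * p.1, p.2) * ((((p.1 - p.2) ^ 2)⁻¹ : ℝ) : ℂ))
      ((ω : ℂ) * ∫ p : ℝ × ℝ,
        ξ p * ((Real.exp (t * ω) * (-p.1 * Real.exp (t * ω) - p.2)
          / (p.1 * Real.exp (t * ω) - p.2) ^ 3 : ℝ) : ℂ))
      t := by
  have hcont : Continuous ξ := aux_cont hlam0 hHolder
  set M := K * (d - c + 1) ^ lam with hMdef
  have hMb : ∀ p : ℝ × ℝ, ‖ξ p‖ ≤ M := aux_bdd hlam0 hK hcd hHolder hsupp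
  have hM : 0 ≤ M := mul_nonneg hK (Real.rpow_nonneg (by linarith) _)
  -- rewrite via change of variables
  have hfun : (fun t : ℝ => ∫ p : ℝ × ℝ,
        ξ (Real.exp (-(t * ω)) * p.1, p.2) * ((((p.1 - p.2) ^ 2)⁻¹ : ℝ) : ℂ))
      = fun s : ℝ => ∫ p : ℝ × ℝ,
        ξ p * ((Real.exp (s * ω) * ((Real.exp (s * ω) * p.1 - p.2) ^ 2)⁻¹ : ℝ) : ℂ) := by
    funext s
    rw [show Real.exp (-(s * ω)) = (Real.exp (s * ω))⁻¹ from Real.exp_neg _]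
    exact aux_change ha hd hM hcont hMb hsupp (Real.exp_pos _)
  rw [hfun]
  -- dominated differentiation
  set S : Set (ℝ × ℝ) := Set.Icc a b ×ˢ Set.Icc c d with hSdef
  set E1 := Real.exp ((|t| + 1) * ω) with hE1def
  have hE1 : 0 < E1 := Real.exp_pos _
  set C : ℝ := M * (ω * (E1 * (b * E1 + -c) / (-d) ^ 3)) with hCdef
  have hexp_le : ∀ s ∈ Metric.ball t 1, Real.exp (s * ω) ≤ E1 := by
    intro s hs
    rw [Metric.mem_ball, Real.dist_eq] at hs
    rw [hE1def]
    apply Real.exp_le_exp.2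
    exact mul_le_mul_of_nonneg_right (by nlinarith [abs_lt.1 hs, le_abs_self t]) hω.le
  have h_bound : ∀ p : ℝ × ℝ, ∀ s ∈ Metric.ball t 1,
      ‖ξ p * ((ω * (Real.exp (s * ω) * (-p.1 * Real.exp (s * ω) - p.2)
        / (p.1 * Real.exp (s * ω) - p.2) ^ 3) : ℝ) : ℂ)‖
        ≤ S.indicator (fun _ => C) p := by
    intro p s hs
    by_cases hp : p ∈ S
    · rw [Set.indicator_of_mem hp]
      have hp1a : a ≤ p.1 := hp.1.1
      have hp1b : p.1 ≤ b := hp.1.2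
      have hp2c : c ≤ p.2 := hp.2.1
      have hp2d : p.2 ≤ d := hp.2.2
      have hes : 0 < Real.exp (s * ω) := Real.exp_pos _
      have hesE1 : Real.exp (s * ω) ≤ E1 := hexp_le s hs
      have hden : -d ≤ p.1 * Real.exp (s * ω) - p.2 := by nlinarith
      have hd0 : (0:ℝ) < -d := by linarith
      have hdenpos : (0:ℝ) < p.1 * Real.exp (s * ω) - p.2 := by linarith
      have hden3 : (-d) ^ 3 ≤ (p.1 * Real.exp (s * ω) - p.2) ^ 3 :=
        pow_le_pow_left₀ hd0.le hden 3
      have hnum : |(-p.1 * Real.exp (s * ω) - p.2)| ≤ b * E1 + -c := by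
        rw [abs_le]
        constructor <;> nlinarith
      have hnorm : ‖ξ p * ((ω * (Real.exp (s * ω) * (-p.1 * Real.exp (s * ω) - p.2)
          / (p.1 * Real.exp (s * ω) - p.2) ^ 3) : ℝ) : ℂ)‖
          = ‖ξ p‖ * |ω * (Real.exp (s * ω) * (-p.1 * Real.exp (s * ω) - p.2)
          / (p.1 * Real.exp (s * ω) - p.2) ^ 3)| := by
        rw [norm_mul, Complex.norm_real, Real.norm_eq_abs]
      rw [hnorm, hCdef]
      refine mul_le_mul (hMb p) ?_ (abs_nonneg _) hM
      rw [abs_mul, abs_of_pos hω]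
      refine mul_le_mul_of_nonneg_left ?_ hω.le
      rw [abs_div, abs_of_pos (by positivity : (0:ℝ) < (p.1 * Real.exp (s * ω) - p.2) ^ 3),
        abs_mul, abs_of_pos hes]
      have hb0 : (0:ℝ) < b := ha.trans hab
      have hbc : (0:ℝ) < b * E1 + -c := by nlinarith [mul_pos hb0 hE1]
      refine div_le_div₀ (mul_nonneg hE1.le hbc.le) ?_ (by positivity) hden3
      exact mul_le_mul hesE1 hnum (abs_nonneg _) hE1.le
    · rw [Set.indicator_of_notMem hp,
        show p = (p.1, p.2) from rfl, hsupp _ _ hp]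
      simp
  have h_diff : ∀ p : ℝ × ℝ, ∀ s ∈ Metric.ball t 1,
      HasDerivAt (fun s : ℝ =>
        ξ p * ((Real.exp (s * ω) * ((Real.exp (s * ω) * p.1 - p.2) ^ 2)⁻¹ : ℝ) : ℂ))
      (ξ p * ((ω * (Real.exp (s * ω) * (-p.1 * Real.exp (s * ω) - p.2)
        / (p.1 * Real.exp (s * ω) - p.2) ^ 3) : ℝ) : ℂ)) s := by
    intro p s _
    by_cases hp : p ∈ S
    · have hx : 0 < p.1 := lt_of_lt_of_le ha hp.1.1
      have hy : p.2 < 0 := lt_of_le_of_lt hp.2.2 hd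
      exact ((aux_deriv hx hy s).ofReal_comp).const_mul (ξ p)
    · have h0 : ξ p = 0 := by
        rw [show p = (p.1, p.2) from rfl]
        exact hsupp _ _ hp
      simp only [h0, zero_mul]
      exact hasDerivAt_const s 0
  have main := hasDerivAt_integral_of_dominated_loc_of_deriv_le
    (F := fun s : ℝ => fun p : ℝ × ℝ =>
      ξ p * ((Real.exp (s * ω) * ((Real.exp (s * ω) * p.1 - p.2) ^ 2)⁻¹ : ℝ) : ℂ))
    (F' := fun s : ℝ => fun p : ℝ × ℝ =>
      ξ p * ((ω * (Real.exp (s * ω) * (-p.1 * Real.exp (s * ω) - p.2)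
        / (p.1 * Real.exp (s * ω) - p.2) ^ 3) : ℝ) : ℂ))
    (x₀ := t) (bound := S.indicator (fun _ => C)) (s := Metric.ball t 1) (Metric.ball_mem_nhds t one_pos)
    (Filter.Eventually.of_forall fun s => aux_meas_H hcont (Real.exp (s * ω)))
    (aux_integrable_H ha hd hM hcont hMb hsupp (Real.exp_pos (t * ω)))
    ((hcont.measurable.mul (Complex.measurable_ofReal.comp
      (measurable_const.mul
        ((measurable_const.mul (((measurable_fst.neg.mul_const (Real.exp (t * ω))).sub
          measurable_snd))).div
         (((measurable_fst.mul_const (Real.exp (t * ω))).sub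
          measurable_snd).pow_const 3))))).aestronglyMeasurable)
    (Filter.Eventually.of_forall h_bound)
    ((integrable_indicator_iff (measurableSet_Icc.prod measurableSet_Icc)).2
      (integrableOn_const ((isCompact_Icc.prod isCompact_Icc).measure_lt_top.ne)))
    (Filter.Eventually.of_forall h_diff)
  refine main.2.congr_deriv ?_
  rw [← integral_const_mul]
  congr 1
  funext p
  push_cast
  ring
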